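/- arXiv:1412.0222 — 3 statements merged into one kernel-verified Lean document; each statement's English description precedes it below -/
import Mathlib

section
/- (Jensen inequality for the normalized partial trace and the quasi-norm ‖·‖_{p/2}.) Let 0<p≤2 and let t be a positive semidefinite matrix in M_m(ℂ) ⊗ M_n(ℂ), viewed as an m×m block matrix (t_{ij})_{1≤i,j≤m} with blocks t_{ij} ∈ M_n(ℂ). Then (1/m)·Tr(t^{p/2}) ≤ Tr( ((1/m)·∑_{i=1}^m t_{ii})^{p/2} ), where the powers p/2 are taken by the spectral functional calculus of positive semidefinite matrices. -/
open scoped BigOperators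
open Matrix MeasureTheory
open scoped ComplexOrder

/-- `A^β` for a Hermitian (in practice positive semidefinite) matrix `A`, via the
spectral functional calculus (with the conventions of `Real.rpow` on eigenvalues,
in particular `0 ^ β = 0` for `β ≠ 0`), extended by `0` to non-Hermitian matrices. -/
noncomputable def posPow {ι : Type*} [Fintype ι] [DecidableEq ι]
    (A : Matrix ι ι ℂ) (β : ℝ) : Matrix ι ι ℂ :=
  if hA : A.IsHermitian then hA.cfc (fun t => t ^ β) else 0

/-- Schatten `p`-(quasi)norm of a complex matrix: `(Tr((A*A)^(p/2)))^(1/p)`. -/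
noncomputable def schattenNorm {ι : Type*} [Fintype ι] [DecidableEq ι]
    (p : ℝ) (A : Matrix ι ι ℂ) : ℝ :=
  ((posPow (Aᴴ * A) (p / 2)).trace.re) ^ (1 / p)

/-- Operator norm of a matrix, acting on the Euclidean space. -/
noncomputable def opNorm {ι : Type*} [Fintype ι] [DecidableEq ι]
    (A : Matrix ι ι ℂ) : ℝ :=
  ‖Matrix.toEuclideanCLM (𝕜 := ℂ) A‖

/-- The quantity `|||x|||_p` for `0 < p ≤ 2`: the infimum of
`‖(∑ aₖ*aₖ)^(1/2)‖_p + ‖(∑ bₖbₖ*)^(1/2)‖_p` over decompositions `xₖ = aₖ + bₖ`. -/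
noncomputable def tripleNorm {n N : ℕ} (p : ℝ)
    (x : Fin N → Matrix (Fin n) (Fin n) ℂ) : ℝ :=
  sInf { r : ℝ | ∃ a b : Fin N → Matrix (Fin n) (Fin n) ℂ,
    (∀ k, x k = a k + b k) ∧
    r = schattenNorm p (posPow (∑ k, (a k)ᴴ * a k) (1/2))
        + schattenNorm p (posPow (∑ k, b k * (b k)ᴴ) (1/2)) }

/-- `E_ε ‖∑ ε_k x_k‖_p ^ p`, the average over a uniformly random choice of signs. -/
noncomputable def radAvg {n N : ℕ} (p : ℝ)
    (x : Fin N → Matrix (Fin n) (Fin n) ℂ) : ℝ :=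
  (1 / 2 ^ N) * ∑ ε : Fin N → Bool,
    (schattenNorm p (∑ k, (if ε k then (1 : ℂ) else -1) • x k)) ^ p

section Aux

variable {ι : Type*} [Fintype ι] [DecidableEq ι]

lemma trace_hermitian_cfc {A : Matrix ι ι ℂ} (hA : A.IsHermitian) (f : ℝ → ℝ) :
    (hA.cfc f).trace = ∑ i, (f (hA.eigenvalues i) : ℂ) := by
  rw [Matrix.IsHermitian.cfc, Unitary.conjStarAlgAut_apply, Matrix.trace_mul_cycle,
    Matrix.mem_unitaryGroup_iff'.mp (Matrix.IsHermitian.eigenvectorUnitary hA).2, one_mul,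
    Matrix.trace_diagonal]
  rfl

lemma psd_add {A B : Matrix ι ι ℂ} (hA : A.PosSemidef) (hB : B.PosSemidef) :
    (A + B).PosSemidef :=
  ⟨hA.1.add hB.1, fun x => by
    exact (hA.add hB).2 x⟩

lemma psd_smul {A : Matrix ι ι ℂ} (hA : A.PosSemidef) {c : ℝ} (hc : 0 ≤ c) :
    ((c : ℂ) • A).PosSemidef := by
  refine ⟨?_, fun x => ?_⟩
  · rw [Matrix.IsHermitian, conjTranspose_smul, hA.1]
    simp [Complex.star_def, Complex.conj_ofReal]
  · exact (hA.smul (Complex.zero_le_real.mpr hc)).2 x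

lemma unitary_row {U : Matrix ι ι ℂ} (hU : U ∈ Matrix.unitaryGroup ι ℂ) (x y : ι) :
    ∑ a, U x a * star (U y a) = if x = y then 1 else 0 := by
  have h := Matrix.mem_unitaryGroup_iff.mp hU
  have h2 : (U * star U) x y = (1 : Matrix ι ι ℂ) x y := by rw [h]
  simpa [Matrix.mul_apply, Matrix.star_apply, Matrix.one_apply] using h2

lemma unitary_col {U : Matrix ι ι ℂ} (hU : U ∈ Matrix.unitaryGroup ι ℂ) (a b : ι) :
    ∑ x, star (U x a) * U x b = if a = b then 1 else 0 := by
  have h := Matrix.mem_unitaryGroup_iff'.mp hU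
  have h2 : (star U * U) a b = (1 : Matrix ι ι ℂ) a b := by rw [h]
  simpa [Matrix.mul_apply, Matrix.star_apply, Matrix.one_apply] using h2

lemma herm_entry {A : Matrix ι ι ℂ} (hA : A.IsHermitian) (x y : ι) :
    A x y = ∑ a, (hA.eigenvectorUnitary : Matrix ι ι ℂ) x a * (hA.eigenvalues a : ℂ)
      * star ((hA.eigenvectorUnitary : Matrix ι ι ℂ) y a) := by
  conv_lhs => rw [hA.spectral_theorem]
  simp [Matrix.mul_apply, Matrix.diagonal_apply, Matrix.star_apply, ite_mul, zero_mul,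
    Finset.sum_ite_eq, Finset.sum_ite_eq']

lemma herm_diag_entry {A : Matrix ι ι ℂ} (hA : A.IsHermitian) (b : ι) :
    ∑ z, ∑ y, star ((hA.eigenvectorUnitary : Matrix ι ι ℂ) z b) * A z y
      * (hA.eigenvectorUnitary : Matrix ι ι ℂ) y b = (hA.eigenvalues b : ℂ) := by
  have h : star (hA.eigenvectorUnitary : Matrix ι ι ℂ) * A * (hA.eigenvectorUnitary : Matrix ι ι ℂ)
      = diagonal (RCLike.ofReal ∘ hA.eigenvalues) := by
    have h1 := Matrix.mem_unitaryGroup_iff'.mp hA.eigenvectorUnitary.2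
    conv_lhs => arg 1; arg 2; rw [hA.spectral_theorem]
    rw [Unitary.conjStarAlgAut_apply]
    simp only [Matrix.mul_assoc]
    rw [h1, Matrix.mul_one, ← Matrix.mul_assoc, h1, Matrix.one_mul]
  have h2 := congrFun (congrFun (congrArg (fun M => (M : Matrix ι ι ℂ)) h) b) b
  simp only [Matrix.mul_apply, Matrix.star_apply, Matrix.diagonal_apply_eq,
    Function.comp_apply, Finset.sum_mul] at h2
  rw [Finset.sum_comm]
  exact h2

lemma tangent {β lam mu : ℝ} (hβ0 : 0 < β) (hβ1 : β ≤ 1) (hlam : 0 ≤ lam) (hmu : 0 < mu) :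
    lam ^ β ≤ (1 - β) * mu ^ β + β * mu ^ (β - 1) * lam := by
  have h := Real.geom_mean_le_arith_mean2_weighted hβ0.le (by linarith : (0:ℝ) ≤ 1 - β)
    hlam hmu.le (by ring)
  have hmul := mul_le_mul_of_nonneg_left h (le_of_lt (Real.rpow_pos_of_pos hmu (β - 1)))
  have hkey : mu ^ (β - 1) * mu ^ (1 - β) = 1 := by
    rw [← Real.rpow_add hmu]
    norm_num
  have hmu' : mu ^ (β - 1) * mu = mu ^ β := by
    nth_rewrite 2 [← Real.rpow_one mu]
    rw [← Real.rpow_add hmu]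
    norm_num
  calc lam ^ β = mu ^ (β - 1) * (lam ^ β * mu ^ (1 - β)) := by
        rw [mul_comm (lam ^ β) _, ← mul_assoc, hkey, one_mul]
    _ ≤ mu ^ (β - 1) * (β * lam + (1 - β) * mu) := hmul
    _ = β * (mu ^ (β - 1) * lam) + (1 - β) * (mu ^ (β - 1) * mu) := by ring
    _ = (1 - β) * mu ^ β + β * mu ^ (β - 1) * lam := by rw [hmu']; ring

lemma sum_rotate {α γ δ : Type*} [Fintype α] [Fintype γ] [Fintype δ]
    (G : α → γ → δ → ℝ) :
    ∑ a : α, ∑ i : γ, ∑ b : δ, G a i b = ∑ b : δ, ∑ a : α, ∑ i : γ, G a i b :=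
  calc ∑ a : α, ∑ i : γ, ∑ b : δ, G a i b
      = ∑ a : α, ∑ b : δ, ∑ i : γ, G a i b :=
        Finset.sum_congr rfl fun _ _ => Finset.sum_comm
    _ = ∑ b : δ, ∑ a : α, ∑ i : γ, G a i b := Finset.sum_comm

end Aux

set_option maxHeartbeats 1000000 in
/-- Jensen's inequality for the normalized partial trace and `‖·‖_(p/2)`, `0 < p ≤ 2`. -/
theorem statement8 (p : ℝ) (hp0 : 0 < p) (hp2 : p ≤ 2) (m n : ℕ) (hm : 0 < m)
    (t : Matrix (Fin m × Fin n) (Fin m × Fin n) ℂ) (ht : t.PosSemidef) :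
    (1 / m : ℝ) * (posPow t (p / 2)).trace.re ≤
      (posPow ((1 / m : ℂ) •
          ∑ i : Fin m, (Matrix.of (fun a b => t (i, a) (i, b)) : Matrix (Fin n) (Fin n) ℂ))
        (p / 2)).trace.re := by
  have hm' : (0 : ℝ) < m := by exact_mod_cast hm
  have hβ0 : 0 < p / 2 := by linarith
  have hβ1 : p / 2 ≤ 1 := by linarith
  set β := p / 2 with hβ_def
  set s : Matrix (Fin n) (Fin n) ℂ :=
    (1 / m : ℂ) • ∑ i : Fin m,
      (Matrix.of (fun a b => t (i, a) (i, b)) : Matrix (Fin n) (Fin n) ℂ) with hs_def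
  have hs : s.PosSemidef := by
    have h1 : (∑ i : Fin m,
        (Matrix.of (fun a b => t (i, a) (i, b)) : Matrix (Fin n) (Fin n) ℂ)).PosSemidef := by
      refine Finset.sum_induction _ _ (fun A B hA hB => psd_add hA hB) Matrix.PosSemidef.zero ?_
      intro i _
      exact ht.submatrix (Prod.mk i)
    have hcast : ((1 / m : ℝ) : ℂ) = (1 / m : ℂ) := by push_cast; ring
    rw [hs_def, ← hcast]
    exact psd_smul h1 (by positivity)
  simp only [posPow, dif_pos ht.1, dif_pos hs.1, trace_hermitian_cfc, Complex.re_sum,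
    Complex.ofReal_re]
  set lam := ht.1.eigenvalues with hlam_def
  set nu := hs.1.eigenvalues with hnu_def
  have hlam0 : ∀ a, 0 ≤ lam a := ht.eigenvalues_nonneg
  have hnu0 : ∀ b, 0 ≤ nu b := hs.eigenvalues_nonneg
  rw [one_div, inv_mul_le_iff₀ hm']
  -- main inequality with ε-regularization
  have key : ∀ ε : ℝ, 0 < ε →
      ∑ a, lam a ^ β ≤ (m : ℝ) * ∑ b, (nu b + ε) ^ β := by
    intro ε hε
    set U : Matrix (Fin m × Fin n) (Fin m × Fin n) ℂ := (ht.1.eigenvectorUnitary : Matrix (Fin m × Fin n) (Fin m × Fin n) ℂ) with hU_def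
    set Q : Matrix (Fin n) (Fin n) ℂ := (hs.1.eigenvectorUnitary : Matrix (Fin n) (Fin n) ℂ) with hQ_def
    set d : (Fin m × Fin n) → Fin m → Fin n → ℂ :=
      fun a i b => ∑ y, star (U (i, y) a) * Q y b with hd_def
    set r : (Fin m × Fin n) → Fin m → Fin n → ℝ :=
      fun a i b => Complex.normSq (d a i b) with hr_def
    have hr0 : ∀ a i b, 0 ≤ r a i b := fun a i b => Complex.normSq_nonneg _
    have hdstar : ∀ a i b, star (d a i b) = ∑ z, U (i, z) a * star (Q z b) := by
      intro a i b
      rw [hd_def]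
      simp only [star_sum, star_mul', star_star]
    have hconv : ∀ a i b, ((r a i b : ℝ) : ℂ) = d a i b * star (d a i b) := by
      intro a i b
      rw [hr_def, Complex.star_def, Complex.mul_conj]
    have hQrow : ∀ y z, ∑ b, Q y b * star (Q z b) = if y = z then (1 : ℂ) else 0 :=
      unitary_row hs.1.eigenvectorUnitary.2
    have hQcol : ∀ a b, ∑ x, star (Q x a) * Q x b = if a = b then (1 : ℂ) else 0 :=
      unitary_col hs.1.eigenvectorUnitary.2
    have hUcol : ∀ a c, ∑ x, star (U x a) * U x c = if a = c then (1 : ℂ) else 0 :=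
      unitary_col ht.1.eigenvectorUnitary.2
    have hUrow' : ∀ (i : Fin m) (y z : Fin n),
        ∑ a, star (U (i, y) a) * U (i, z) a = if z = y then (1 : ℂ) else 0 := by
      intro i y z
      calc ∑ a, star (U (i, y) a) * U (i, z) a
          = ∑ a, U (i, z) a * star (U (i, y) a) :=
            Finset.sum_congr rfl fun a _ => mul_comm _ _
        _ = if (i, z) = (i, y) then (1 : ℂ) else 0 :=
            unitary_row ht.1.eigenvectorUnitary.2 (i, z) (i, y)
        _ = if z = y then (1 : ℂ) else 0 := by simp [Prod.ext_iff]
    have hT : ∀ (i : Fin m) (y z : Fin n),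
        ∑ a, (lam a : ℂ) * (star (U (i, y) a) * U (i, z) a) = t (i, z) (i, y) := by
      intro i y z
      rw [herm_entry ht.1 (i, z) (i, y)]
      exact Finset.sum_congr rfl fun a _ => by ring
    -- E1
    have E1 : ∀ a, ∑ i : Fin m, ∑ b : Fin n, ((r a i b : ℝ) : ℂ) = 1 := by
      intro a
      calc ∑ i : Fin m, ∑ b : Fin n, ((r a i b : ℝ) : ℂ)
          = ∑ i, ∑ b, ∑ y, ∑ z,
              (star (U (i, y) a) * U (i, z) a) * (Q y b * star (Q z b)) := by
            refine Finset.sum_congr rfl fun i _ => Finset.sum_congr rfl fun b _ => ?_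
            rw [hconv, hdstar, hd_def]
            rw [Finset.sum_mul_sum]
            exact Finset.sum_congr rfl fun y _ => Finset.sum_congr rfl fun z _ => by ring
        _ = ∑ i, ∑ y, ∑ z, ∑ b,
              (star (U (i, y) a) * U (i, z) a) * (Q y b * star (Q z b)) := by
            refine Finset.sum_congr rfl fun i _ => ?_
            rw [Finset.sum_comm]
            exact Finset.sum_congr rfl fun y _ => Finset.sum_comm
        _ = ∑ i, ∑ y, star (U (i, y) a) * U (i, y) a := by
            refine Finset.sum_congr rfl fun i _ => Finset.sum_congr rfl fun y _ => ?_
            simp only [← Finset.mul_sum, hQrow, mul_ite, mul_one, mul_zero]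
            simp [Finset.sum_ite_eq]
        _ = ∑ x : Fin m × Fin n, star (U x a) * U x a := by
            rw [Fintype.sum_prod_type]
        _ = 1 := by rw [hUcol a a]; simp
    -- E2
    have E2 : ∀ b, ∑ a : Fin m × Fin n, ∑ i : Fin m, ((r a i b : ℝ) : ℂ) = (m : ℂ) := by
      intro b
      have h1 : ∀ i : Fin m, ∑ a : Fin m × Fin n, ((r a i b : ℝ) : ℂ) = 1 := by
        intro i
        calc ∑ a : Fin m × Fin n, ((r a i b : ℝ) : ℂ)
            = ∑ a, ∑ y, ∑ z,
                (star (U (i, y) a) * U (i, z) a) * (Q y b * star (Q z b)) := by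
              refine Finset.sum_congr rfl fun a _ => ?_
              rw [hconv, hdstar, hd_def]
              rw [Finset.sum_mul_sum]
              exact Finset.sum_congr rfl fun y _ => Finset.sum_congr rfl fun z _ => by ring
          _ = ∑ y, ∑ z, ∑ a,
                (star (U (i, y) a) * U (i, z) a) * (Q y b * star (Q z b)) := by
              rw [Finset.sum_comm]
              exact Finset.sum_congr rfl fun y _ => Finset.sum_comm
          _ = ∑ y, Q y b * star (Q y b) := by
              refine Finset.sum_congr rfl fun y _ => ?_
              simp only [← Finset.sum_mul, hUrow', ite_mul, one_mul, zero_mul]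
              simp [Finset.sum_ite_eq]
          _ = ∑ y, star (Q y b) * Q y b :=
              Finset.sum_congr rfl fun y _ => mul_comm _ _
          _ = 1 := by rw [hQcol b b]; simp
      rw [Finset.sum_comm]
      simp [h1]
    -- E3
    have E3 : ∀ b, ∑ a : Fin m × Fin n, ∑ i : Fin m, ((lam a * r a i b : ℝ) : ℂ)
        = ((m : ℝ) * nu b : ℝ) := by
      intro b
      rw [Finset.sum_comm]
      have hsum_t : ∀ (z y : Fin n), ∑ i : Fin m, t (i, z) (i, y) = (m : ℂ) * s z y := by
        intro z y
        rw [hs_def]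
        simp only [Matrix.smul_apply, Matrix.sum_apply, Matrix.of_apply, smul_eq_mul]
        rw [← mul_assoc]
        have : (m : ℂ) * (1 / m : ℂ) = 1 := by
          field_simp
        rw [this, one_mul]
      calc ∑ i : Fin m, ∑ a : Fin m × Fin n, ((lam a * r a i b : ℝ) : ℂ)
          = ∑ i, ∑ a, ∑ y, ∑ z,
              ((lam a : ℂ) * (star (U (i, y) a) * U (i, z) a)) * (Q y b * star (Q z b)) := by
            refine Finset.sum_congr rfl fun i _ => Finset.sum_congr rfl fun a _ => ?_
            rw [Complex.ofReal_mul, hconv, hdstar, hd_def]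
            rw [Finset.sum_mul_sum, Finset.mul_sum]
            refine Finset.sum_congr rfl fun y _ => ?_
            rw [Finset.mul_sum]
            exact Finset.sum_congr rfl fun z _ => by ring
        _ = ∑ i, ∑ y, ∑ z, (∑ a, (lam a : ℂ) * (star (U (i, y) a) * U (i, z) a))
              * (Q y b * star (Q z b)) := by
            refine Finset.sum_congr rfl fun i _ => ?_
            rw [Finset.sum_comm]
            refine Finset.sum_congr rfl fun y _ => ?_
            rw [Finset.sum_comm]
            exact Finset.sum_congr rfl fun z _ => by rw [Finset.sum_mul]
        _ = ∑ y, ∑ z, (∑ i, t (i, z) (i, y)) * (Q y b * star (Q z b)) := by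
            rw [Finset.sum_comm]
            refine Finset.sum_congr rfl fun y _ => ?_
            rw [Finset.sum_comm]
            refine Finset.sum_congr rfl fun z _ => ?_
            rw [Finset.sum_mul]
            exact Finset.sum_congr rfl fun i _ => by rw [hT]
        _ = (m : ℂ) * ∑ z, ∑ y, star (Q z b) * s z y * Q y b := by
            rw [Finset.mul_sum, Finset.sum_comm]
            refine Finset.sum_congr rfl fun z _ => ?_
            rw [Finset.mul_sum]
            refine Finset.sum_congr rfl fun y _ => ?_
            rw [hsum_t]
            ring
        _ = (m : ℂ) * (nu b : ℂ) := by rw [herm_diag_entry hs.1 b]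
        _ = (((m : ℝ) * nu b : ℝ) : ℂ) := by push_cast; ring
    have R1 : ∀ a, ∑ i : Fin m, ∑ b : Fin n, r a i b = 1 := by
      intro a; exact_mod_cast E1 a
    have R2 : ∀ b, ∑ a : Fin m × Fin n, ∑ i : Fin m, r a i b = (m : ℝ) := by
      intro b; exact_mod_cast E2 b
    have R3 : ∀ b, ∑ a : Fin m × Fin n, ∑ i : Fin m, lam a * r a i b = (m : ℝ) * nu b := by
      intro b; exact_mod_cast E3 b
    have hx : ∀ b, 0 < nu b + ε := fun b => add_pos_of_nonneg_of_pos (hnu0 b) hε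
    calc ∑ a, lam a ^ β
        = ∑ a, ∑ i : Fin m, ∑ b : Fin n, r a i b * lam a ^ β := by
          refine Finset.sum_congr rfl fun a _ => ?_
          simp only [← Finset.sum_mul]
          rw [R1 a, one_mul]
      _ ≤ ∑ a, ∑ i : Fin m, ∑ b : Fin n,
            r a i b * ((1 - β) * (nu b + ε) ^ β + β * (nu b + ε) ^ (β - 1) * lam a) := by
          refine Finset.sum_le_sum fun a _ => Finset.sum_le_sum fun i _ =>
            Finset.sum_le_sum fun b _ => ?_
          exact mul_le_mul_of_nonneg_left (tangent hβ0 hβ1 (hlam0 a) (hx b)) (hr0 a i b)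
      _ = ∑ b : Fin n, ((1 - β) * (nu b + ε) ^ β * (∑ a, ∑ i : Fin m, r a i b)
            + β * (nu b + ε) ^ (β - 1) * (∑ a, ∑ i : Fin m, lam a * r a i b)) := by
          rw [sum_rotate]
          refine Finset.sum_congr rfl fun b _ => ?_
          simp only [Finset.mul_sum, ← Finset.sum_add_distrib]
          refine Finset.sum_congr rfl fun a _ => Finset.sum_congr rfl fun i _ => by ring
      _ = ∑ b : Fin n, ((1 - β) * (nu b + ε) ^ β * m
            + β * (nu b + ε) ^ (β - 1) * ((m : ℝ) * nu b)) := by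
          refine Finset.sum_congr rfl fun b _ => ?_
          rw [R2 b, R3 b]
      _ ≤ ∑ b : Fin n, ((1 - β) * (nu b + ε) ^ β * m
            + β * (nu b + ε) ^ (β - 1) * ((m : ℝ) * (nu b + ε))) := by
          refine Finset.sum_le_sum fun b _ => add_le_add_right ?_ _
          refine mul_le_mul_of_nonneg_left
            (mul_le_mul_of_nonneg_left (by linarith) (by positivity : (0:ℝ) ≤ (m:ℝ)))
            (mul_nonneg hβ0.le (Real.rpow_nonneg (hx b).le _))
      _ = ∑ b : Fin n, (m : ℝ) * (nu b + ε) ^ β := by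
          refine Finset.sum_congr rfl fun b _ => ?_
          have hxx : (nu b + ε) ^ (β - 1) * (nu b + ε) = (nu b + ε) ^ β := by
            rw [Real.rpow_sub_one (hx b).ne', div_mul_cancel₀ _ (hx b).ne']
          linear_combination (β * (m : ℝ)) * hxx
      _ = (m : ℝ) * ∑ b : Fin n, (nu b + ε) ^ β := by rw [Finset.mul_sum]
  -- pass to the limit ε → 0⁺
  have hlim : Filter.Tendsto (fun ε : ℝ => (m : ℝ) * ∑ b, (nu b + ε) ^ β)
      (nhdsWithin 0 (Set.Ioi 0)) (nhds ((m : ℝ) * ∑ b, nu b ^ β)) := by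
    apply Filter.Tendsto.const_mul
    have : ∀ b : Fin n, Filter.Tendsto (fun ε : ℝ => (nu b + ε) ^ β)
        (nhdsWithin 0 (Set.Ioi 0)) (nhds (nu b ^ β)) := by
      intro b
      have hc : ContinuousAt (fun ε : ℝ => (nu b + ε) ^ β) 0 := by
        have h1 : ContinuousAt (fun x : ℝ => x ^ β) (nu b + 0) :=
          Real.continuousAt_rpow_const _ _ (Or.inr hβ0.le)
        exact h1.comp (continuousAt_const.add continuousAt_id)
      have := hc.tendsto.mono_left (nhdsWithin_le_nhds (s := Set.Ioi (0:ℝ)))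
      simpa using this
    exact tendsto_finset_sum _ fun b _ => this b
  refine ge_of_tendsto hlim ?_
  exact Filter.eventually_of_mem self_mem_nhdsWithin fun ε hε => key ε hε
end

section
/- (2-concavity of Schatten p-classes for 0<p≤2.) Let 0<p≤2. For every n, N and all matrices z_1,…,z_N ∈ M_n(ℂ): (∑_{i=1}^N ‖z_i‖_p^2)^{1/2} ≤ ‖(∑_{i=1}^N z_i* z_i)^{1/2}‖_p. -/
open scoped BigOperators
open Matrix MeasureTheory
open scoped ComplexOrder

section Aux


open Matrix
open scoped ComplexOrder

variable {m : Type*} [Fintype m] [DecidableEq m] {A : Matrix m m ℂ}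

lemma my_cfc_trace (hA : A.IsHermitian) (f : ℝ → ℝ) :
    (hA.cfc f).trace = ((∑ k, f (hA.eigenvalues k) : ℝ) : ℂ) := by
  rw [Matrix.IsHermitian.cfc, Unitary.conjStarAlgAut_apply, Matrix.trace_mul_cycle]
  rw [show (star (hA.eigenvectorUnitary : Matrix m m ℂ)) * (hA.eigenvectorUnitary : Matrix m m ℂ)
      = 1 from Unitary.star_mul_self_of_mem (SetLike.coe_mem _), one_mul, trace_diagonal]
  push_cast
  rfl

lemma my_cfc_mul (hA : A.IsHermitian) (f g : ℝ → ℝ) :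
    hA.cfc f * hA.cfc g = hA.cfc fun t => f t * g t := by
  have h : ∀ {a b c d e f : Matrix m m ℂ},
      (a * b * c) * (d * e * f) = a * (b * (c * d) * e) * f := by
    intros; simp only [mul_assoc]
  simp only [Matrix.IsHermitian.cfc, Unitary.conjStarAlgAut_apply, h, SetLike.coe_mem, Unitary.star_mul_self_of_mem, mul_one,
    diagonal_mul_diagonal]
  congr! with i
  simp

lemma my_cfc_herm (hA : A.IsHermitian) (f : ℝ → ℝ) : (hA.cfc f).IsHermitian := by
  unfold Matrix.IsHermitian.cfc
  simp only [Unitary.conjStarAlgAut_apply, Matrix.IsHermitian, star_eq_conjTranspose, conjTranspose_mul,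
    conjTranspose_conjTranspose, diagonal_conjTranspose, mul_assoc]
  congr!
  funext i
  simp [Function.comp]

lemma my_cfc_congr (hA : A.IsHermitian) {f g : ℝ → ℝ}
    (h : ∀ k, f (hA.eigenvalues k) = g (hA.eigenvalues k)) : hA.cfc f = hA.cfc g := by
  unfold Matrix.IsHermitian.cfc
  have he : (RCLike.ofReal ∘ f ∘ hA.eigenvalues : m → ℂ) = RCLike.ofReal ∘ g ∘ hA.eigenvalues :=
    funext fun k => by simp [Function.comp, h k]
  rw [he]

lemma my_cfc_id (hA : A.IsHermitian) : hA.cfc (fun t => t) = A := by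
  conv_rhs => rw [hA.spectral_theorem]
  rfl

lemma my_trace_form (W : Matrix m m ℂ) (α χ : m → ℝ) :
    (star W * Matrix.diagonal (fun k => (α k : ℂ)) * W
        * Matrix.diagonal (fun j => (χ j : ℂ))).trace
      = ((∑ j, ∑ k, α k * χ j * Complex.normSq (W k j) : ℝ) : ℂ) := by
  simp only [Matrix.trace, Matrix.diag_apply, Matrix.mul_apply, Matrix.diagonal_apply,
    Matrix.star_apply, Complex.star_def, ite_mul, mul_ite, zero_mul, mul_zero,
    Finset.sum_ite_eq, Finset.sum_ite_eq', Finset.mem_univ, if_true]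
  push_cast
  congr 1; funext j
  rw [Finset.sum_mul]
  congr 1; funext k
  rw [← Complex.mul_conj]
  ring





lemma rev_young {q : ℝ} (hq0 : 0 < q) (hq1 : q < 1) {a x : ℝ} (ha : 0 ≤ a) (hx : 0 < x) :
    a ^ q ≤ q * (a * x) + (1 - q) * x ^ (q / (q - 1)) := by
  have h := Real.geom_mean_le_arith_mean2_weighted (w₁ := q) (w₂ := 1 - q)
    (p₁ := a * x) (p₂ := x ^ (q / (q - 1))) hq0.le (by linarith)
    (mul_nonneg ha hx.le) (Real.rpow_nonneg hx.le _) (by ring)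
  calc a ^ q = (a * x) ^ q * (x ^ (q / (q - 1))) ^ (1 - q) := by
        rw [Real.mul_rpow ha hx.le, ← Real.rpow_mul hx.le]
        have hne : q - 1 ≠ 0 := by linarith
        have h2 : q / (q - 1) * (1 - q) = -q := by field_simp; ring
        rw [h2, mul_assoc, ← Real.rpow_add hx]
        simp
    _ ≤ q * (a * x) + (1 - q) * x ^ (q / (q - 1)) := h

/-- Reverse Hölder with doubly-stochastic weights. -/
lemma scalar_key {M : Type*} [Fintype M] {q : ℝ} (hq0 : 0 < q) (hq1 : q < 1)
    (a x d : M → M → ℝ → ℝ) : True := trivial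

lemma scalar_key' {M : Type*} [Fintype M] {q : ℝ} (hq0 : 0 < q) (hq1 : q < 1)
    (a x : M → ℝ) (d : M → M → ℝ)
    (ha : ∀ i, 0 ≤ a i) (hx : ∀ j, 0 ≤ x j) (hd : ∀ i j, 0 ≤ d i j)
    (hrow : ∀ i, ∑ j, d i j = 1) (hcol : ∀ j, ∑ i, d i j = 1)
    (hker : ∀ i j, x j = 0 → a i * d i j = 0) :
    (∑ i, a i ^ q) ^ (1 / q) * (∑ j, x j ^ (q / (q - 1))) ^ ((q - 1) / q) ≤
      ∑ i, ∑ j, d i j * (a i * x j) := by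
  set r : ℝ := q / (q - 1) with hr
  have hrneg : r < 0 := div_neg_of_pos_of_neg hq0 (by linarith)
  have hA0 : 0 ≤ ∑ i, a i ^ q := Finset.sum_nonneg fun i _ => Real.rpow_nonneg (ha i) _
  have hX0 : 0 ≤ ∑ j, x j ^ r := Finset.sum_nonneg fun j _ => Real.rpow_nonneg (hx j) _
  have hRHS : 0 ≤ ∑ i, ∑ j, d i j * (a i * x j) :=
    Finset.sum_nonneg fun i _ => Finset.sum_nonneg fun j _ =>
      mul_nonneg (hd i j) (mul_nonneg (ha i) (hx j))
  rcases eq_or_lt_of_le hA0 with hA | hA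
  · rw [← hA, Real.zero_rpow (by positivity), zero_mul]; exact hRHS
  rcases eq_or_lt_of_le hX0 with hX | hX
  · rw [← hX, Real.zero_rpow (by intro h; rw [div_eq_zero_iff] at h; rcases h with h|h <;> linarith),
      mul_zero]; exact hRHS
  set α : ℝ := (∑ i, a i ^ q) ^ (1 / q) with hα
  set ξ : ℝ := (∑ j, x j ^ r) ^ ((q - 1) / q) with hξ
  have hαpos : 0 < α := Real.rpow_pos_of_pos hA _
  have hξpos : 0 < ξ := Real.rpow_pos_of_pos hX _
  have hαq : α ^ q = ∑ i, a i ^ q := by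
    rw [hα, ← Real.rpow_mul hA0, one_div, inv_mul_cancel₀ (ne_of_gt hq0), Real.rpow_one]
  have hξr : ξ ^ r = ∑ j, x j ^ r := by
    rw [hξ, ← Real.rpow_mul hX0, div_mul_div_comm, mul_comm (q-1) q,
      div_self (by intro h; rw [mul_eq_zero] at h; rcases h with h|h <;> [exact hq0.ne' h; linarith]),
      Real.rpow_one]
  -- per-pair inequality
  have key : ∀ i j, d i j * ((a i / α) ^ q / q + (x j / ξ) ^ r * ((q - 1) / q)) ≤
      d i j * ((a i / α) * (x j / ξ)) := by
    intro i j
    rcases eq_or_lt_of_le (hx j) with hxj | hxj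
    · have h1 : a i * d i j = 0 := hker i j hxj.symm
      rcases mul_eq_zero.mp h1 with h | h
      · rw [h, ← hxj]
        simp [Real.zero_rpow (ne_of_gt hq0), Real.zero_rpow (ne_of_lt hrneg), zero_div,
          zero_mul, mul_zero]
      · simp [h]
    · apply mul_le_mul_of_nonneg_left _ (hd i j)
      have hy := rev_young hq0 hq1 (div_nonneg (ha i) hαpos.le) (div_pos hxj hξpos)
      rw [← hr] at hy
      have e : (1 - q) * (x j / ξ) ^ r = -((x j / ξ) ^ r * (q - 1)) := by ring
      have goal2 : (a i / α) ^ q + (x j / ξ) ^ r * (q - 1) ≤ (a i / α * (x j / ξ)) * q := by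
        linarith
      have e2 : (a i / α) ^ q / q + (x j / ξ) ^ r * ((q - 1) / q)
          = ((a i / α) ^ q + (x j / ξ) ^ r * (q - 1)) / q := by ring
      rw [e2, div_le_iff₀ hq0]
      exact goal2
  have sum_le := Finset.sum_le_sum (s := Finset.univ)
    (fun i _ => Finset.sum_le_sum (s := Finset.univ) (fun j _ => key i j))
  have hsumA : ∑ i, (a i / α) ^ q / q = 1 / q := by
    simp_rw [Real.div_rpow (ha _) hαpos.le]
    rw [← Finset.sum_div, ← Finset.sum_div, ← hαq, div_self (by positivity), one_div]
  have hsumB : ∑ j, (x j / ξ) ^ r * ((q - 1) / q) = (q - 1) / q := by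
    simp_rw [Real.div_rpow (hx _) hξpos.le]
    rw [← Finset.sum_mul, ← Finset.sum_div, ← hξr, div_self (by positivity), one_mul]
  have hLHS : ∑ i, ∑ j, d i j * ((a i / α) ^ q / q + (x j / ξ) ^ r * ((q - 1) / q)) = 1 := by
    simp_rw [mul_add, Finset.sum_add_distrib]
    have e1 : ∑ i, ∑ j, d i j * ((a i / α) ^ q / q) = ∑ i, (a i / α) ^ q / q := by
      apply Finset.sum_congr rfl; intro i _
      rw [← Finset.sum_mul, hrow i, one_mul]
    have e2 : ∑ i, ∑ j, d i j * ((x j / ξ) ^ r * ((q - 1) / q))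
        = ∑ j, (x j / ξ) ^ r * ((q - 1) / q) := by
      rw [Finset.sum_comm]
      apply Finset.sum_congr rfl; intro j _
      rw [← Finset.sum_mul, hcol j, one_mul]
    rw [e1, e2, hsumA, hsumB, ← add_div, show (1:ℝ)+(q-1)=q by ring, div_self hq0.ne']
  have hRHS' : ∑ i, ∑ j, d i j * (a i / α * (x j / ξ))
      = (∑ i, ∑ j, d i j * (a i * x j)) / (α * ξ) := by
    rw [Finset.sum_div]
    apply Finset.sum_congr rfl; intro i _
    rw [Finset.sum_div]
    apply Finset.sum_congr rfl; intro j _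
    field_simp
  rw [hLHS, hRHS'] at sum_le
  calc α * ξ = 1 * (α * ξ) := (one_mul _).symm
    _ ≤ (∑ i, ∑ j, d i j * (a i * x j)) / (α * ξ) * (α * ξ) := by
        apply mul_le_mul_of_nonneg_right sum_le (by positivity)
    _ = ∑ i, ∑ j, d i j * (a i * x j) := div_mul_cancel₀ _ (by positivity)

section Helpers
variable {m : Type*} [Fintype m] [DecidableEq m]

lemma my_trace_pair (P Q D₁ D₂ : Matrix m m ℂ) :
    (P * D₁ * star P * (Q * D₂ * star Q)).trace
      = (star (star P * Q) * D₁ * (star P * Q) * D₂).trace := by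
  rw [show P * D₁ * star P * (Q * D₂ * star Q) = (P * (D₁ * (star P * (Q * D₂)))) * star Q by
    simp only [mul_assoc]]
  rw [Matrix.trace_mul_comm, StarMul.star_mul, star_star]
  simp only [mul_assoc]

lemma my_sum_mulVec {N : ℕ} (B : Fin N → Matrix m m ℂ) (u : m → ℂ) :
    (∑ i, B i) *ᵥ u = ∑ i, (B i) *ᵥ u := by
  funext s
  simp only [Matrix.mulVec, dotProduct, Finset.sum_apply, Matrix.sum_apply,
    Finset.sum_mul]
  exact Finset.sum_comm

lemma my_dotProduct_sum {N : ℕ} (u : m → ℂ) (w : Fin N → m → ℂ) :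
    dotProduct (star u) (∑ i, w i) = ∑ i, dotProduct (star u) (w i) := by
  simp only [dotProduct, Finset.sum_apply, Finset.mul_sum]
  exact Finset.sum_comm

end Helpers

section Key
variable {m : Type*} [Fintype m] [DecidableEq m]

lemma key_superadd {N : ℕ} {q : ℝ} (hq0 : 0 < q) (hq1 : q < 1)
    (B : Fin N → Matrix m m ℂ) (hB : ∀ i, (B i).PosSemidef)
    (hC : (∑ i, B i).PosSemidef) :
    ∑ i, (∑ k, ((hB i).1.eigenvalues k) ^ q) ^ (1/q)
      ≤ (∑ j, (hC.1.eigenvalues j) ^ q) ^ (1/q) := by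
  classical
  set μ : m → ℝ := hC.1.eigenvalues with hμdef
  have hμ : ∀ j, 0 ≤ μ j := hC.eigenvalues_nonneg
  set T : ℝ := ∑ j, μ j ^ q with hTdef
  have hT0 : 0 ≤ T := Finset.sum_nonneg fun j _ => Real.rpow_nonneg (hμ j) _
  -- trace of a Hermitian matrix as sum of eigenvalues
  have htr : ∀ (D : Matrix m m ℂ) (hD : D.IsHermitian),
      D.trace = ((∑ k, hD.eigenvalues k : ℝ) : ℂ) := by
    intro D hD
    conv_lhs => rw [← my_cfc_id hD]
    rw [my_cfc_trace]
  rcases eq_or_lt_of_le hT0 with hT | hT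
  · -- degenerate case : all eigenvalues of C vanish, so all B i vanish
    have hμ0 : ∀ j, μ j = 0 := by
      intro j
      by_contra h
      have hj : 0 < μ j := lt_of_le_of_ne (hμ j) (Ne.symm h)
      have : 0 < T := by
        refine lt_of_lt_of_le (Real.rpow_pos_of_pos hj q) ?_
        exact Finset.single_le_sum (f := fun j => μ j ^ q)
          (fun j _ => Real.rpow_nonneg (hμ j) _) (Finset.mem_univ j)
      linarith
    have htrC : ((∑ i, B i).trace) = 0 := by
      rw [htr _ hC.1, ← hμdef]
      simp [hμ0]
    have h1 : ∑ i, ∑ k, (hB i).1.eigenvalues k = 0 := by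
      have h2 := congrArg Complex.re htrC
      rw [Matrix.trace_sum] at h2
      have h3 : ∀ i, ((B i).trace).re = ∑ k, (hB i).1.eigenvalues k := by
        intro i; rw [htr _ (hB i).1, Complex.ofReal_re]
      rw [Complex.re_sum] at h2
      simp only [h3] at h2
      simpa using h2
    have hZ : ∀ i, ∑ k, (hB i).1.eigenvalues k = 0 := by
      intro i
      have := (Finset.sum_eq_zero_iff_of_nonneg
        (fun i _ => Finset.sum_nonneg fun k _ => (hB i).eigenvalues_nonneg k)).mp h1
      exact this i (Finset.mem_univ i)
    have hev0 : ∀ i, ∀ k, (hB i).1.eigenvalues k = 0 := by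
      intro i
      have := (Finset.sum_eq_zero_iff_of_nonneg
        (fun k _ => (hB i).eigenvalues_nonneg k)).mp (hZ i)
      exact fun k => this k (Finset.mem_univ k)
    rw [← hT]
    apply le_of_eq
    rw [Real.zero_rpow (by positivity)]
    apply Finset.sum_eq_zero
    intro i _
    rw [Finset.sum_eq_zero (fun k _ => by rw [hev0 i k, Real.zero_rpow hq0.ne']),
      Real.zero_rpow (by positivity)]
  · -- main case `0 < T`
    set U : Matrix m m ℂ := (hC.1.eigenvectorUnitary : Matrix m m ℂ) with hUdef
    have hUU : star U * U = 1 := Unitary.star_mul_self_of_mem (SetLike.coe_mem _)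
    have hUU' : U * star U = 1 := Unitary.mul_star_self_of_mem (SetLike.coe_mem _)
    set x : m → ℝ := fun j => μ j ^ (q - 1) with hxdef
    have hx0 : ∀ j, 0 ≤ x j := fun j => Real.rpow_nonneg (hμ j) _
    set X : Matrix m m ℂ := hC.1.cfc (fun t => t ^ (q - 1)) with hXdef
    set r : ℝ := q / (q - 1) with hrdef
    have hq1ne : q - 1 ≠ 0 := by intro h; linarith
    have hxr : ∑ j, x j ^ r = T := by
      apply Finset.sum_congr rfl; intro j _
      rcases eq_or_lt_of_le (hμ j) with h | h
      · rw [hxdef]; simp only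
        rw [← h, Real.zero_rpow hq1ne, Real.zero_rpow (div_ne_zero hq0.ne' hq1ne),
          Real.zero_rpow hq0.ne']
      · rw [hxdef]; simp only
        rw [← Real.rpow_mul h.le, hrdef]
        congr 1
        field_simp
    -- the trace of `B i * X` as a doubly stochastic pairing
    have main_i : ∀ i, (∑ k, ((hB i).1.eigenvalues k) ^ q) ^ (1/q) * T ^ ((q-1)/q)
        ≤ ((B i * X).trace).re := by
      intro i
      set a : m → ℝ := (hB i).1.eigenvalues with hadef
      have ha0 : ∀ k, 0 ≤ a k := (hB i).eigenvalues_nonneg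
      set V : Matrix m m ℂ := ((hB i).1.eigenvectorUnitary : Matrix m m ℂ) with hVdef
      have hVV : star V * V = 1 := Unitary.star_mul_self_of_mem (SetLike.coe_mem _)
      have hVV' : V * star V = 1 := Unitary.mul_star_self_of_mem (SetLike.coe_mem _)
      set W : Matrix m m ℂ := star V * U with hWdef
      have hWW' : W * star W = 1 := by
        rw [hWdef, StarMul.star_mul, star_star, mul_assoc, ← mul_assoc U, hUU', one_mul, hVV]
      have hWW : star W * W = 1 := by
        rw [hWdef, StarMul.star_mul, star_star, mul_assoc, ← mul_assoc V, hVV', one_mul,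
          hUU]
      set d : m → m → ℝ := fun k j => Complex.normSq (W k j) with hddef
      have hrow : ∀ k, ∑ j, d k j = 1 := by
        intro k
        have e := congrArg (fun M : Matrix m m ℂ => M k k) hWW'
        simp only [Matrix.mul_apply, Matrix.one_apply_eq, Matrix.star_apply,
          Complex.star_def, Complex.mul_conj] at e
        exact_mod_cast e
      have hcol : ∀ j, ∑ k, d k j = 1 := by
        intro j
        have e := congrArg (fun M : Matrix m m ℂ => M j j) hWW
        simp only [Matrix.mul_apply, Matrix.one_apply_eq, Matrix.star_apply,
          Complex.star_def] at e
        have e2 : ∑ k, ((Complex.normSq (W k j) : ℂ)) = 1 := by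
          rw [← e]
          apply Finset.sum_congr rfl; intro k _
          rw [mul_comm, Complex.mul_conj]
        exact_mod_cast e2
      -- the trace formula
      have hXeq : X = U * Matrix.diagonal (fun j => ((x j : ℝ) : ℂ)) * star U := rfl
      have hBeq : B i = V * Matrix.diagonal (fun k => ((a k : ℝ) : ℂ)) * star V :=
        (hB i).1.spectral_theorem
      have htrB : ((B i * X).trace)
          = ((∑ j, ∑ k, a k * x j * Complex.normSq (W k j) : ℝ) : ℂ) := by
        rw [hBeq, hXeq, my_trace_pair, my_trace_form]
      -- kernel condition
      have hker : ∀ k j, x j = 0 → a k * d k j = 0 := by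
        intro k j hxj
        have hμj : μ j = 0 := by
          by_contra h
          have hj : 0 < μ j := lt_of_le_of_ne (hμ j) (Ne.symm h)
          have : 0 < x j := Real.rpow_pos_of_pos hj _
          linarith
        set u : m → ℂ := fun s => U s j with hudef
        have hCU : (∑ i', B i') * U = U * Matrix.diagonal (fun j => ((μ j : ℝ) : ℂ)) := by
          conv_lhs => rw [hC.1.spectral_theorem]
          rw [Unitary.conjStarAlgAut_apply, mul_assoc, hUU, mul_one]
          rfl
        have hCu : (∑ i', B i') *ᵥ u = 0 := by
          funext s
          have : ((∑ i', B i') *ᵥ u) s = ((∑ i', B i') * U) s j := by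
            simp [Matrix.mulVec, dotProduct, Matrix.mul_apply, hudef]
          rw [this, hCU, Matrix.mul_diagonal, hμj]
          simp
        have heach : dotProduct (star u) (B i *ᵥ u) = 0 := by
          have hsum : ∑ i', dotProduct (star u) (B i' *ᵥ u) = 0 := by
            rw [← my_dotProduct_sum, ← my_sum_mulVec, hCu]
            simp
          exact (Finset.sum_eq_zero_iff_of_nonneg
            (fun i' _ => (hB i').dotProduct_mulVec_nonneg u)).mp hsum i (Finset.mem_univ i)
        have hBu : B i *ᵥ u = 0 := ((hB i).dotProduct_mulVec_zero_iff u).mp heach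
        have hDW : Matrix.diagonal (fun k => ((a k : ℝ) : ℂ)) * W = star V * (B i * U) := by
          rw [hWdef, ← mul_assoc, ← mul_assoc]
          congr 1
          rw [hBeq]
          simp only [← mul_assoc]
          rw [hVV, one_mul]
        have hcol0 : (Matrix.diagonal (fun k => ((a k : ℝ) : ℂ)) * W) k j = 0 := by
          rw [hDW, Matrix.mul_apply]
          apply Finset.sum_eq_zero; intro s _
          have hBU : (B i * U) s j = 0 := by
            have h5 := congrFun hBu s
            simp only [Matrix.mulVec, dotProduct, hudef, Pi.zero_apply] at h5
            rw [Matrix.mul_apply]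
            exact h5
          rw [hBU, mul_zero]
        rw [Matrix.diagonal_mul] at hcol0
        rcases mul_eq_zero.mp hcol0 with h | h
        · rw [Complex.ofReal_eq_zero.mp h, zero_mul]
        · rw [hddef]; simp only [h, map_zero, mul_zero]
      -- apply the scalar inequality
      have hs := scalar_key' hq0 hq1 a x d ha0 hx0
        (fun k j => Complex.normSq_nonneg _) hrow hcol hker
      rw [hxr] at hs
      rw [htrB, Complex.ofReal_re]
      refine le_trans hs (le_of_eq ?_)
      rw [Finset.sum_comm]
      apply Finset.sum_congr rfl; intro j _
      apply Finset.sum_congr rfl; intro k _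
      rw [hddef]; ring
    -- sum over `i`
    have hsum_trace : ∑ i, ((B i * X).trace).re = T := by
      have h6 : ∑ i, (B i * X).trace = ((∑ i, B i) * X).trace := by
        rw [Finset.sum_mul, Matrix.trace_sum]
      have htrCX : ((∑ i, B i) * X).trace = (T : ℂ) := by
        conv_lhs => rw [show (∑ i, B i) = hC.1.cfc (fun t => t) from (my_cfc_id hC.1).symm]
        rw [my_cfc_mul, my_cfc_trace]
        simp only [← hμdef]
        norm_cast
        apply Finset.sum_congr rfl; intro j _
        rcases eq_or_lt_of_le (hμ j) with h | h
        · rw [← h, Real.zero_rpow hq1ne, Real.zero_rpow hq0.ne', mul_zero]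
        · have he : μ j * μ j ^ (q - 1) = μ j ^ (1 + (q - 1)) := by
            rw [Real.rpow_add h, Real.rpow_one]
          rw [he]
          norm_num
      rw [← Complex.re_sum, h6, htrCX, Complex.ofReal_re]
    have hfinal := Finset.sum_le_sum (s := Finset.univ) (fun i _ => main_i i)
    rw [← Finset.sum_mul, hsum_trace] at hfinal
    have hTpos' : 0 < T ^ ((q-1)/q) := Real.rpow_pos_of_pos hT _
    rw [← mul_le_mul_iff_left₀ hTpos']
    calc (∑ i, (∑ k, ((hB i).1.eigenvalues k) ^ q) ^ (1/q)) * T ^ ((q-1)/q) ≤ T := hfinal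
      _ = T ^ ((1:ℝ)/q) * T ^ ((q-1)/q) := by
          rw [← Real.rpow_add hT]
          rw [show (1:ℝ)/q + (q-1)/q = 1 by field_simp; ring]
          exact (Real.rpow_one T).symm

end Key

section Final
variable {m : Type*} [Fintype m] [DecidableEq m]

lemma key_superadd' {N : ℕ} {q : ℝ} (hq0 : 0 < q) (hq1 : q ≤ 1)
    (B : Fin N → Matrix m m ℂ) (hB : ∀ i, (B i).PosSemidef)
    (hC : (∑ i, B i).PosSemidef) :
    ∑ i, (∑ k, ((hB i).1.eigenvalues k) ^ q) ^ (1/q)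
      ≤ (∑ j, (hC.1.eigenvalues j) ^ q) ^ (1/q) := by
  rcases lt_or_eq_of_le hq1 with h | h
  · exact key_superadd hq0 h B hB hC
  · subst h
    simp only [Real.rpow_one, div_one]
    have htr : ∀ (D : Matrix m m ℂ) (hD : D.IsHermitian),
        D.trace = ((∑ k, hD.eigenvalues k : ℝ) : ℂ) := by
      intro D hD
      conv_lhs => rw [← my_cfc_id hD]
      rw [my_cfc_trace]
    apply le_of_eq
    have h2 : (((∑ i, B i).trace) : ℂ).re = ∑ j, hC.1.eigenvalues j := by
      rw [htr _ hC.1, Complex.ofReal_re]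
    rw [← h2, Matrix.trace_sum, Complex.re_sum]
    apply Finset.sum_congr rfl; intro i _
    rw [htr _ (hB i).1, Complex.ofReal_re]

lemma posPow_eq {A : Matrix m m ℂ} (hA : A.IsHermitian) (β : ℝ) :
    posPow A β = hA.cfc (fun t => t ^ β) := dif_pos hA

end Final

end Aux

/-- 2-concavity of the Schatten `p`-classes for `0 < p ≤ 2`. -/
theorem statement9 (p : ℝ) (hp0 : 0 < p) (hp2 : p ≤ 2) (n N : ℕ)
    (z : Fin N → Matrix (Fin n) (Fin n) ℂ) :
    (∑ i, schattenNorm p (z i) ^ 2) ^ (1/2 : ℝ) ≤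
      schattenNorm p (posPow (∑ i, (z i)ᴴ * z i) (1/2)) := by
  classical
  set B : Fin N → Matrix (Fin n) (Fin n) ℂ := fun i => (z i)ᴴ * z i with hBdef
  have hB : ∀ i, (B i).PosSemidef := fun i => Matrix.posSemidef_conjTranspose_mul_self _
  have hC : (∑ i, B i).PosSemidef := by
    have h0 : (0 : Matrix (Fin n) (Fin n) ℂ).PosSemidef :=
      ⟨Matrix.isHermitian_zero, fun x => by simp⟩
    exact Finset.sum_induction B Matrix.PosSemidef
      (fun _ _ hx hy => hx.add hy) h0 (fun i _ => hB i)
  set q : ℝ := p / 2 with hqdef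
  have hq0 : 0 < q := by positivity
  have hq1 : q ≤ 1 := by rw [hqdef]; linarith
  set μ : Fin n → ℝ := hC.1.eigenvalues with hμdef
  have hμ : ∀ j, 0 ≤ μ j := hC.eigenvalues_nonneg
  set T : ℝ := ∑ j, μ j ^ q with hTdef
  have hT0 : 0 ≤ T := Finset.sum_nonneg fun j _ => Real.rpow_nonneg (hμ j) _
  -- left side values
  have hsch : ∀ i, schattenNorm p (z i)
      = (∑ k, ((hB i).1.eigenvalues k) ^ q) ^ (1/p) := by
    intro i
    rw [schattenNorm, posPow_eq (hB i).1, my_cfc_trace, Complex.ofReal_re]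
  -- right side : the square root matrix
  have hRHS : schattenNorm p (posPow (∑ i, B i) (1/2)) = T ^ (1/p) := by
    rw [posPow_eq hC.1 (1/2)]
    set S : Matrix (Fin n) (Fin n) ℂ := hC.1.cfc (fun t => t ^ ((1:ℝ)/2)) with hSdef
    have hSh : S.IsHermitian := my_cfc_herm _ _
    have hSS : Sᴴ * S = ∑ i, B i := by
      rw [hSh]
      rw [hSdef, my_cfc_mul]
      rw [my_cfc_congr hC.1 (g := fun t => t) (by
        intro k
        rw [← Real.rpow_add' (hμ k) (by norm_num)]
        norm_num
        rfl)]
      exact my_cfc_id hC.1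
    rw [schattenNorm, hSS, posPow_eq hC.1, my_cfc_trace, Complex.ofReal_re]
  rw [hRHS]
  -- rewrite the left side
  have hXnn : ∀ i, 0 ≤ ∑ k, ((hB i).1.eigenvalues k) ^ q :=
    fun i => Finset.sum_nonneg fun k _ => Real.rpow_nonneg ((hB i).eigenvalues_nonneg k) _
  have hL : ∀ i, schattenNorm p (z i) ^ 2 = (∑ k, ((hB i).1.eigenvalues k) ^ q) ^ (1/q) := by
    intro i
    rw [hsch i, ← Real.rpow_natCast ((∑ k, ((hB i).1.eigenvalues k) ^ q) ^ (1/p)) 2,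
      ← Real.rpow_mul (hXnn i)]
    congr 1
    rw [hqdef]
    push_cast
    field_simp
  have hkey := key_superadd' hq0 hq1 B hB hC
  calc (∑ i, schattenNorm p (z i) ^ 2) ^ (1/2 : ℝ)
      = (∑ i, (∑ k, ((hB i).1.eigenvalues k) ^ q) ^ (1/q)) ^ (1/2 : ℝ) := by
        congr 1
        exact Finset.sum_congr rfl fun i _ => hL i
    _ ≤ ((∑ j, μ j ^ q) ^ (1/q)) ^ (1/2 : ℝ) := by
        apply Real.rpow_le_rpow
          (Finset.sum_nonneg fun i _ => Real.rpow_nonneg (hXnn i) _) hkey (by norm_num)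
    _ = T ^ (1/p) := by
        rw [← Real.rpow_mul hT0]
        congr 1
        rw [hqdef]
        field_simp
end

section
/- (Hahn–Banach separation for cones of bounded functions, Lemma 4.1, finite form.) Let S be a set and let F be a convex cone of bounded real-valued functions on S such that sup_{s∈S} f(s) ≥ 0 for every f ∈ F. Then for every finite family f_1,…,f_n ∈ F and every ε > 0 there exists a finitely supported probability measure λ on S such that ∫ f_j dλ ≥ −ε for all j = 1,…,n. -/
open scoped BigOperators

/-- Lemma 4.1 (finite form): Hahn–Banach separation for convex cones of bounded
real-valued functions. -/
theorem statement13 {S : Type*} [Nonempty S] (F : Set (S → ℝ))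
    (hadd : ∀ f ∈ F, ∀ g ∈ F, f + g ∈ F)
    (hsmul : ∀ c : ℝ, 0 ≤ c → ∀ f ∈ F, c • f ∈ F)
    (hbdd : ∀ f ∈ F, ∃ M : ℝ, ∀ s : S, |f s| ≤ M)
    (hsup : ∀ f ∈ F, ∀ δ : ℝ, 0 < δ → ∃ s : S, -δ ≤ f s)
    (N : ℕ) (f : Fin N → (S → ℝ)) (hf : ∀ j, f j ∈ F)
    (ε : ℝ) (hε : 0 < ε) :
    ∃ (m : ℕ) (pts : Fin m → S) (w : Fin m → ℝ),
      (∀ i, 0 ≤ w i) ∧ (∑ i, w i = 1) ∧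
      ∀ j, -ε ≤ ∑ i, w i * f j (pts i) := by
  by_contra hcon
  push_neg at hcon
  -- hcon : ∀ m pts w, (∀ i, 0 ≤ w i) → ∑ w = 1 → ∃ j, ∑ i, w i * f j (pts i) < -ε
  set φ : S → (Fin N → ℝ) := fun s j => f j s with hφ
  set A : Set (Fin N → ℝ) := convexHull ℝ (Set.range φ) with hA
  set B : Set (Fin N → ℝ) := {x | ∀ j, -(ε/2) ≤ x j} with hB
  -- A is bounded
  choose M hM using fun j => hbdd (f j) (hf j)
  have hAb : Bornology.IsBounded A := by
    rw [hA, isBounded_convexHull]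
    have hsub : Set.range φ ⊆ Metric.closedBall 0 (∑ j, max (M j) 0) := by
      rintro _ ⟨s, rfl⟩
      rw [Metric.mem_closedBall, dist_zero_right]
      refine pi_norm_le_iff_of_nonneg ?_ |>.2 fun j => ?_
      · exact Finset.sum_nonneg fun j _ => le_max_right _ _
      · refine le_trans ?_ (Finset.single_le_sum (f := fun j => max (M j) 0)
          (fun j _ => le_max_right _ _) (Finset.mem_univ j))
        exact le_trans (by simpa [Real.norm_eq_abs] using hM j s) (le_max_left _ _)
    exact Metric.isBounded_closedBall.subset hsub
  have hAc : IsCompact (closure A) := hAb.isCompact_closure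
  have hAconv : Convex ℝ (closure A) := (convex_convexHull ℝ _).closure
  have hBconv : Convex ℝ B := by
    intro x hx y hy a b ha hb hab
    intro j
    simp only [Pi.add_apply, Pi.smul_apply, smul_eq_mul]
    nlinarith [mul_le_mul_of_nonneg_left (hx j) ha, mul_le_mul_of_nonneg_left (hy j) hb]
  have hBclosed : IsClosed B := by
    have : B = ⋂ j, {x : Fin N → ℝ | -(ε/2) ≤ x j} := by
      ext x; simp [hB]
    rw [this]
    exact isClosed_iInter fun j => isClosed_le continuous_const (continuous_apply j)
  have hdisj : Disjoint (closure A) B := by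
    rw [Set.disjoint_left]
    intro x hx hxB
    obtain ⟨y, hyA, hxy⟩ := Metric.mem_closure_iff.1 hx (ε/2) (by linarith)
    rw [hA, mem_convexHull_iff_exists_fintype] at hyA
    obtain ⟨ι, _, w, z, hw0, hw1, hz, hzy⟩ := hyA
    choose pts hpts using fun i => hz i
    set e := (Fintype.equivFin ι).symm
    obtain ⟨j, hj⟩ := hcon (Fintype.card ι) (pts ∘ e) (w ∘ e)
      (fun i => hw0 (e i)) (by rw [← hw1]; exact Equiv.sum_comp e w)
    have hyj : y j = ∑ i, w i * f j (pts i) := by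
      rw [← hzy]
      rw [Finset.sum_apply]
      refine Finset.sum_congr rfl fun i _ => ?_
      rw [Pi.smul_apply, smul_eq_mul, ← hpts i]
    have hsum : ∑ i, (w ∘ e) i * f j ((pts ∘ e) i) = ∑ i, w i * f j (pts i) :=
      Equiv.sum_comp e (fun i => w i * f j (pts i))
    have hyj' : y j < -ε := by rw [hyj, ← hsum]; exact hj
    have : |x j - y j| < ε/2 :=
      lt_of_le_of_lt (by simpa [Real.dist_eq] using dist_le_pi_dist x y j) hxy
    have hxj := hxB j
    have := abs_lt.1 this
    linarith
  obtain ⟨L, u, v, hLu, huv, hLv⟩ :=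
    geometric_hahn_banach_compact_closed hAconv hAc hBconv hBclosed hdisj
  set c : Fin N → ℝ := fun j => L (fun k => if j = k then 1 else 0) with hc
  have hLrep : ∀ x : Fin N → ℝ, L x = ∑ j, x j * c j := by
    intro x
    conv_lhs => rw [pi_eq_sum_univ x]
    rw [map_sum]
    exact Finset.sum_congr rfl fun j _ => by rw [map_smul, smul_eq_mul]
  have hb0 : (fun _ => -(ε/2) : Fin N → ℝ) ∈ B := fun j => le_refl _
  have hvb0 : v < L (fun _ => -(ε/2)) := hLv _ hb0
  -- all c j ≥ 0
  have hcpos : ∀ j, 0 ≤ c j := by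
    intro j
    by_contra hcj
    push_neg at hcj
    set t : ℝ := (v - L (fun _ => -(ε/2))) / c j with ht
    have htpos : 0 ≤ t := le_of_lt (div_pos_of_neg_of_neg (by linarith) hcj)
    set b : Fin N → ℝ := fun k => if j = k then -(ε/2) + t else -(ε/2) with hbdef
    have hbB : b ∈ B := by
      intro k
      simp only [hbdef]
      by_cases hk : j = k <;> simp [hk] <;> linarith
    have hbeq : b = (fun _ => -(ε/2)) + t • (fun k => if j = k then (1:ℝ) else 0) := by
      funext k
      simp only [hbdef, Pi.add_apply, Pi.smul_apply, smul_eq_mul]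
      by_cases hk : j = k <;> simp [hk]
    have : L b = L (fun _ => -(ε/2)) + t * c j := by
      rw [hbeq, map_add, map_smul, smul_eq_mul]
    have htc : t * c j = v - L (fun _ => -(ε/2)) := div_mul_cancel₀ _ (ne_of_lt hcj)
    have := hLv b hbB
    rw [‹L b = _›, htc] at this
    linarith
  -- L b₀ = -(ε/2) * ∑ c j
  have hLb0 : L (fun _ => -(ε/2)) = -(ε/2) * ∑ j, c j := by
    rw [hLrep, Finset.mul_sum]
  obtain ⟨s0⟩ := ‹Nonempty S›
  have hphiA : ∀ s, φ s ∈ closure A :=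
    fun s => subset_closure (subset_convexHull ℝ _ ⟨s, rfl⟩)
  have hLphi : ∀ s, L (φ s) < u := fun s => hLu _ (hphiA s)
  -- ∑ c j > 0
  have hsumpos : 0 < ∑ j, c j := by
    rcases lt_or_eq_of_le (Finset.sum_nonneg fun j _ => hcpos j) with h | h
    · exact h
    · exfalso
      have hcz : ∀ j, c j = 0 := by
        intro j
        have := (Finset.sum_eq_zero_iff_of_nonneg (fun j _ => hcpos j)).1 h.symm
        exact this j (Finset.mem_univ j)
      have h1 : L (φ s0) = 0 := by
        rw [hLrep]; simp [hcz]
      have h2 := hLphi s0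
      rw [hLb0, ← h, mul_zero] at hvb0
      rw [h1] at h2
      linarith
  have hu0 : u < 0 := by
    rw [hLb0] at hvb0
    nlinarith
  -- the function g = ∑ c j • f j is in F
  have hgF : ∀ t : Finset (Fin N), N ≠ 0 → (∑ j ∈ t, c j • f j) ∈ F := by
    intro t hN
    induction t using Finset.induction with
    | empty =>
      have j0 : Fin N := ⟨0, Nat.pos_of_ne_zero hN⟩
      have := hsmul 0 le_rfl (f j0) (hf j0)
      simpa using this
    | insert _ _ hni ih =>
      rw [Finset.sum_insert hni]
      exact hadd _ (hsmul _ (hcpos _) _ (hf _)) _ ih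
  have hN : N ≠ 0 := by
    rintro rfl
    simp at hsumpos
  obtain ⟨s, hs⟩ := hsup _ (hgF Finset.univ hN) (-u) (by linarith)
  have : (∑ j, c j • f j) s = L (φ s) := by
    rw [hLrep, Finset.sum_apply]
    exact Finset.sum_congr rfl fun j _ => by
      rw [Pi.smul_apply, smul_eq_mul]; ring
  rw [this] at hs
  have := hLphi s
  linarith
end
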